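/- For all t ∈ [π/3, π/2], the function Z̃(2, t) := log(φ)·(320cos(t)² − 140)/(16cos(t)² − 25)² − log(7/3)·√5·(4cos(t)² − 3)/(4cos(t)² − 5)² satisfies Z̃(2, t) ≥ Z̃(2, π/2) > 0.11. -/

import Mathlib

open Real

noncomputable def phi : ℝ := (1 + Real.sqrt 5) / 2

noncomputable def Ztilde2 (t : ℝ) : ℝ :=
  Real.log phi * (320 * Real.cos t ^ 2 - 140) / (16 * Real.cos t ^ 2 - 25) ^ 2 -
    Real.log (7 / 3) * Real.sqrt 5 * (4 * Real.cos t ^ 2 - 3) /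
      (4 * Real.cos t ^ 2 - 5) ^ 2

lemma sqrt5_bounds : 2.2360679 < Real.sqrt 5 ∧ Real.sqrt 5 < 2.2360680 := by
  have h : Real.sqrt 5 ^ 2 = 5 := Real.sq_sqrt (by norm_num)
  have h0 : 0 ≤ Real.sqrt 5 := Real.sqrt_nonneg 5
  constructor <;> nlinarith

lemma log_phi_lt : Real.log phi < 0.492 := by
  have h5 := sqrt5_bounds
  have hphi : (0:ℝ) < phi := by unfold phi; nlinarith [h5.1]
  rw [← Real.exp_lt_exp, Real.exp_log hphi]
  have h1 : Real.exp 0.492 = Real.exp (0.492/16) ^ (16:ℕ) := by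
    rw [← Real.exp_nat_mul]; norm_num
  have h2 : (1 + 0.492/16 : ℝ) ≤ Real.exp (0.492/16) := by
    have := Real.add_one_le_exp (0.492/16 : ℝ); linarith
  have h3 : (1 + 0.492/16 : ℝ) ^ (16:ℕ) ≤ Real.exp (0.492/16) ^ (16:ℕ) :=
    pow_le_pow_left₀ (by norm_num) h2 16
  have h4 : phi < (1 + 0.492/16 : ℝ) ^ (16:ℕ) := by
    unfold phi; nlinarith [h5.2]
  calc phi < (1 + 0.492/16 : ℝ) ^ (16:ℕ) := h4
    _ ≤ Real.exp (0.492/16) ^ (16:ℕ) := h3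
    _ = Real.exp 0.492 := h1.symm

lemma log_73_gt : Real.log (7/3) > 0.83 := by
  rw [gt_iff_lt, ← Real.exp_lt_exp, Real.exp_log (by norm_num : (0:ℝ) < 7/3)]
  have h1 : Real.exp 0.83 = Real.exp (0.83/32) ^ (32:ℕ) := by
    rw [← Real.exp_nat_mul]; norm_num
  have h2 : Real.exp (-(0.83/32)) ≥ (1 - 0.83/32 : ℝ) := by
    have := Real.add_one_le_exp (-(0.83/32) : ℝ); linarith
  have hpos : (0:ℝ) < 1 - 0.83/32 := by norm_num
  have h3 : Real.exp (0.83/32) ≤ (1 - 0.83/32 : ℝ)⁻¹ := by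
    have h2' : (1 - 0.83/32 : ℝ) ≤ (Real.exp (0.83/32))⁻¹ := by
      rw [← Real.exp_neg]; exact h2
    have := inv_anti₀ hpos h2'
    rwa [inv_inv] at this
  have h4 : Real.exp (0.83/32) ^ (32:ℕ) ≤ ((1 - 0.83/32 : ℝ)⁻¹) ^ (32:ℕ) :=
    pow_le_pow_left₀ (Real.exp_pos _).le h3 32
  have h5 : ((1 - 0.83/32 : ℝ)⁻¹) ^ (32:ℕ) < 7/3 := by
    rw [inv_pow, inv_lt_iff_one_lt_mul₀ (by positivity)]
    norm_num
  calc Real.exp 0.83 = Real.exp (0.83/32) ^ (32:ℕ) := h1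
    _ ≤ ((1 - 0.83/32 : ℝ)⁻¹) ^ (32:ℕ) := h4
    _ < 7/3 := h5

theorem Ztilde2_bound (t : ℝ) (ht : t ∈ Set.Icc (π / 3) (π / 2)) :
    Ztilde2 t ≥ Ztilde2 (π / 2) ∧ Ztilde2 (π / 2) > 0.11 := by
  obtain ⟨ht1, ht2⟩ := ht
  have hpi := Real.pi_pos
  have h5 := sqrt5_bounds
  have hA : 0 ≤ Real.log phi := by
    apply Real.log_nonneg; unfold phi; nlinarith [h5.1]
  have hB : 0 ≤ Real.log (7/3) := Real.log_nonneg (by norm_num)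
  have hc0 : 0 ≤ Real.cos t :=
    Real.cos_nonneg_of_mem_Icc ⟨by linarith, ht2⟩
  have hc1 : Real.cos t ≤ 1/2 := by
    have := Real.cos_le_cos_of_nonneg_of_le_pi (by positivity) (by linarith) ht1
    rwa [Real.cos_pi_div_three] at this
  set u := Real.cos t ^ 2 with hu
  have hu0 : 0 ≤ u := sq_nonneg _
  have hu1 : u ≤ 1/4 := by nlinarith
  have hd1 : (0:ℝ) < (16*u - 25)^2 := by nlinarith
  have hd2 : (0:ℝ) < (4*u - 5)^2 := by nlinarith
  have hcpi : Real.cos (π/2) = 0 := Real.cos_pi_div_two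
  have hZpi : Ztilde2 (π/2) =
      Real.log phi * (-140) / 625 - Real.log (7/3) * Real.sqrt 5 * (-3) / 25 := by
    unfold Ztilde2; rw [hcpi]; norm_num
  constructor
  · rw [ge_iff_le, ← sub_nonneg]
    have key : Ztilde2 t - Ztilde2 (π/2) =
        Real.log phi * (u * (35840*u + 88000)) / (625 * (16*u - 25)^2) +
        Real.log (7/3) * Real.sqrt 5 * (u * (20 - 48*u)) / (25 * (4*u - 5)^2) := by
      rw [hZpi]; unfold Ztilde2
      rw [← hu]
      have hne1 : 16*u - 25 ≠ 0 := (by linarith : 16*u - 25 < 0).ne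
      have hne2 : 4*u - 5 ≠ 0 := (by linarith : 4*u - 5 < 0).ne
      have ha : (16*u - 25)^2 * ((16*u - 25)^2)⁻¹ = 1 := mul_inv_cancel₀ (pow_ne_zero 2 hne1)
      have hb : (4*u - 5)^2 * ((4*u - 5)^2)⁻¹ = 1 := mul_inv_cancel₀ (pow_ne_zero 2 hne2)
      simp only [div_eq_mul_inv, mul_inv]
      linear_combination (-140 * Real.log phi / 625) * ha + (3 * Real.log (7 * 3⁻¹) * Real.sqrt 5 / 25) * hb
    rw [key]
    have hs5 : 0 ≤ Real.sqrt 5 := Real.sqrt_nonneg 5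
    have t1 : 0 ≤ Real.log phi * (u * (35840*u + 88000)) / (625 * (16*u - 25)^2) := by
      apply div_nonneg _ (by positivity)
      apply mul_nonneg hA
      apply mul_nonneg hu0
      nlinarith
    have t2 : 0 ≤ Real.log (7/3) * Real.sqrt 5 * (u * (20 - 48*u)) / (25 * (4*u - 5)^2) := by
      apply div_nonneg _ (by positivity)
      apply mul_nonneg (mul_nonneg hB hs5)
      apply mul_nonneg hu0
      nlinarith
    linarith
  · rw [hZpi]
    have hlphi := log_phi_lt
    have hl73 := log_73_gt
    nlinarith [h5.1, mul_lt_mul_of_pos_right hlphi (show (0:ℝ) < 140/625 by norm_num),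
      mul_lt_mul_of_pos_left hl73 (show (0:ℝ) < 3 * Real.sqrt 5 / 25 by positivity)]
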